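/- If 0 < J ≤ 1, then for every t > 0, the only solution m ∈ [−1,1] of the equation a^J(m) = m·coth(2t) is m = 0. -/

import Mathlib

open Real

lemma sinh_le_mul_cosh {x : ℝ} (hx : 0 ≤ x) : Real.sinh x ≤ x * Real.cosh x := by
  have h : MonotoneOn (fun y : ℝ => y * Real.cosh y - Real.sinh y) (Set.Ici 0) := by
    apply monotoneOn_of_deriv_nonneg (convex_Ici 0)
    · fun_prop
    · fun_prop
    · intro y hy
      have : deriv (fun y : ℝ => y * Real.cosh y - Real.sinh y) y = y * Real.sinh y := by
        rw [deriv_fun_sub (by fun_prop) (by fun_prop), deriv_fun_mul (by fun_prop) (by fun_prop)]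
        simp
      rw [this]
      have h0 : 0 ≤ y := le_of_lt (by simpa [interior_Ici] using hy)
      exact mul_nonneg h0 (Real.sinh_nonneg_iff.mpr h0)
  have := h (Set.self_mem_Ici) (Set.mem_Ici.mpr hx) hx
  simpa using this

lemma key_ineq {J m : ℝ} (hJ0 : 0 < J) (hJ : J ≤ 1) (hm : 0 < m) :
    Real.sinh (2*J*m) - m * Real.cosh (2*J*m) ≤ m := by
  have hJm : 0 ≤ J * m := by positivity
  have h1 : Real.sinh (J*m) ≤ m * Real.cosh (J*m) := by
    calc Real.sinh (J*m) ≤ (J*m) * Real.cosh (J*m) := sinh_le_mul_cosh hJm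
    _ ≤ m * Real.cosh (J*m) := by
        apply mul_le_mul_of_nonneg_right _ (Real.cosh_pos _).le
        nlinarith
  have h2 : Real.sinh (2*J*m) = 2 * Real.sinh (J*m) * Real.cosh (J*m) := by
    rw [show 2*J*m = 2*(J*m) by ring, Real.sinh_two_mul]
  have h3 : Real.cosh (2*J*m) = 2 * Real.cosh (J*m)^2 - 1 := by
    rw [show 2*J*m = 2*(J*m) by ring, Real.cosh_two_mul]
    have := Real.cosh_sq (J*m); linarith
  nlinarith [Real.cosh_pos (J*m)]

theorem unique_zero_solution (J : ℝ) (hJ0 : 0 < J) (hJ : J ≤ 1) (t : ℝ) (ht : 0 < t)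
    (m : ℝ) (hm : m ∈ Set.Icc (-1 : ℝ) 1)
    (heq : Real.sinh (2*J*m) - m * Real.cosh (2*J*m)
      = m * (Real.cosh (2*t) / Real.sinh (2*t))) :
    m = 0 := by
  have hs : 0 < Real.sinh (2*t) := Real.sinh_pos_iff.mpr (by linarith)
  have hc : 1 < Real.cosh (2*t) / Real.sinh (2*t) := by
    rw [lt_div_iff₀ hs, one_mul]
    nlinarith [Real.cosh_sq (2*t), Real.cosh_pos (2*t), hs]
  by_contra h0
  rcases lt_or_gt_of_ne h0 with hneg | hpos
  · -- m < 0, use -m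
    have hkey := key_ineq hJ0 hJ (show 0 < -m by linarith)
    rw [show 2*J*(-m) = -(2*J*m) by ring, Real.sinh_neg, Real.cosh_neg] at hkey
    nlinarith
  · have hkey := key_ineq hJ0 hJ hpos
    nlinarith
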